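/- Let c₁ ≠ 0 and c₂ be real constants, and define R(x,t) = 2c₁·e^{(x+c₂)/c₁} + 8c₁³·e^{−(x+c₂)/c₁} + 4t² + 8c₁². Then the function u(x,t) = (1/2)·√(R(x,t)) is a solution of the Born-Infeld equation on the open set Ω = {(x,t) ∈ ℝ² : R(x,t) > 0}. (This is the group-invariant solution associated to the hyperbolic rotation symmetry v₆ = u∂_t + t∂_u.) -/

import Mathlib

/-- Partial derivative with respect to the first variable `x`. -/
noncomputable def px (u : ℝ × ℝ → ℝ) (p : ℝ × ℝ) : ℝ := fderiv ℝ u p (1, 0)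

/-- Partial derivative with respect to the second variable `t`. -/
noncomputable def pt (u : ℝ × ℝ → ℝ) (p : ℝ × ℝ) : ℝ := fderiv ℝ u p (0, 1)

/-- `u` is a (C²) solution of the Born-Infeld equation
`(1 - u_t²)·u_xx + 2·u_x·u_t·u_xt - (1 + u_x²)·u_tt = 0` on the set `Ω`:
`u` is C² on a neighborhood of `Ω` and the equation holds at every point of `Ω`. -/
def IsBISolution (u : ℝ × ℝ → ℝ) (Ω : Set (ℝ × ℝ)) : Prop :=
  (∃ V : Set (ℝ × ℝ), IsOpen V ∧ Ω ⊆ V ∧ ContDiffOn ℝ 2 u V) ∧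
  ∀ p ∈ Ω,
    (1 - pt u p ^ 2) * px (px u) p + 2 * px u p * pt u p * px (pt u) p
      - (1 + px u p ^ 2) * pt (pt u) p = 0

section Aux
variable (c₁ c₂ : ℝ)

noncomputable def Rf (p : ℝ × ℝ) : ℝ :=
  2 * c₁ * Real.exp ((p.1 + c₂) / c₁) + 8 * c₁ ^ 3 * Real.exp (-((p.1 + c₂) / c₁))
    + 4 * p.2 ^ 2 + 8 * c₁ ^ 2

noncomputable def UX (p : ℝ × ℝ) : ℝ :=
  (4:ℝ)⁻¹ * ((2 * Real.exp ((p.1 + c₂) / c₁) - 8 * c₁ ^ 2 * Real.exp (-((p.1 + c₂) / c₁)))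
    * (Real.sqrt (Rf c₁ c₂ p))⁻¹)

noncomputable def UT (p : ℝ × ℝ) : ℝ :=
  2 * (p.2 * (Real.sqrt (Rf c₁ c₂ p))⁻¹)

end Aux

lemma bi_alg (c₁ e f g t : ℝ) (hc₁ : c₁ ≠ 0) (hg : g ≠ 0) (hef : e * f = 1)
    (hg2 : g ^ 2 = 2*c₁*e + 8*c₁^3*f + 4*t^2 + 8*c₁^2) :
    (1 - (2*t/g)^2) * ((2*e/c₁ + 8*c₁*f)/(4*g) - (2*e - 8*c₁^2*f)^2/(8*g^3))
      + 2 * ((2*e - 8*c₁^2*f)/(4*g)) * (2*t/g) * (-(2*e - 8*c₁^2*f)*t/(g^3))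
      - (1 + ((2*e - 8*c₁^2*f)/(4*g))^2) * (2/g - 8*t^2/g^3) = 0 := by
  have key : (2*e + 8*c₁^2*f)*(g^2 - 4*t^2) - c₁*(2*e - 8*c₁^2*f)^2
      - 8*c₁*g^2 + 32*c₁*t^2 = 0 := by
    rw [hg2]; linear_combination 64*c₁^3*hef
  calc (1 - (2*t/g)^2) * ((2*e/c₁ + 8*c₁*f)/(4*g) - (2*e - 8*c₁^2*f)^2/(8*g^3))
      + 2 * ((2*e - 8*c₁^2*f)/(4*g)) * (2*t/g) * (-(2*e - 8*c₁^2*f)*t/(g^3))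
      - (1 + ((2*e - 8*c₁^2*f)/(4*g))^2) * (2/g - 8*t^2/g^3)
      = ((2*e + 8*c₁^2*f)*(g^2 - 4*t^2) - c₁*(2*e - 8*c₁^2*f)^2
        - 8*c₁*g^2 + 32*c₁*t^2) / (4*c₁*g^3) := by
        field_simp
        ring
    _ = 0 := by rw [key, zero_div]

section Lemmas
variable {c₁ c₂ : ℝ}

lemma hs_deriv (p : ℝ × ℝ) :
    HasFDerivAt (fun q : ℝ × ℝ => (q.1 + c₂) / c₁)
      (c₁⁻¹ • ContinuousLinearMap.fst ℝ ℝ ℝ) p := by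
  simp only [div_eq_mul_inv]
  exact (hasFDerivAt_fst.add_const c₂).mul_const c₁⁻¹

lemma hE_deriv (p : ℝ × ℝ) :
    HasFDerivAt (fun q : ℝ × ℝ => Real.exp ((q.1 + c₂) / c₁))
      (Real.exp ((p.1 + c₂) / c₁) • (c₁⁻¹ • ContinuousLinearMap.fst ℝ ℝ ℝ)) p :=
  (Real.hasDerivAt_exp _).comp_hasFDerivAt p (hs_deriv p)

lemma hF_deriv (p : ℝ × ℝ) :
    HasFDerivAt (fun q : ℝ × ℝ => Real.exp (-((q.1 + c₂) / c₁)))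
      (Real.exp (-((p.1 + c₂) / c₁)) • (-(c₁⁻¹ • ContinuousLinearMap.fst ℝ ℝ ℝ))) p :=
  (Real.hasDerivAt_exp _).comp_hasFDerivAt p (hs_deriv p).neg

lemma hR_deriv (p : ℝ × ℝ) :
    HasFDerivAt (Rf c₁ c₂)
      ((2 * c₁ * Real.exp ((p.1 + c₂) / c₁)) • (c₁⁻¹ • ContinuousLinearMap.fst ℝ ℝ ℝ)
        + (8 * c₁ ^ 3 * Real.exp (-((p.1 + c₂) / c₁))) • (-(c₁⁻¹ • ContinuousLinearMap.fst ℝ ℝ ℝ))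
        + (4 : ℝ) • ((2 * p.2 ^ 1) • ContinuousLinearMap.snd ℝ ℝ ℝ)) p := by
  have hsq : HasFDerivAt (fun q : ℝ × ℝ => q.2 ^ 2)
      ((2 * p.2 ^ 1) • ContinuousLinearMap.snd ℝ ℝ ℝ) p :=
    (hasDerivAt_pow 2 p.2).comp_hasFDerivAt p hasFDerivAt_snd
  have h := ((((hE_deriv (c₁ := c₁) (c₂ := c₂) p).const_mul (2 * c₁)).add
    ((hF_deriv (c₁ := c₁) (c₂ := c₂) p).const_mul (8 * c₁ ^ 3))).add
    (hsq.const_mul 4)).add_const (8 * c₁ ^ 2)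
  refine (h.congr_fderiv ?_).congr_of_eventuallyEq ?_
  · module
  · filter_upwards with q; simp only [Rf, Pi.add_apply]

lemma hSqrt_deriv (p : ℝ × ℝ) (hp : 0 < Rf c₁ c₂ p) :
    HasFDerivAt (fun q => Real.sqrt (Rf c₁ c₂ q))
      ((1 / (2 * Real.sqrt (Rf c₁ c₂ p))) •
        ((2 * c₁ * Real.exp ((p.1 + c₂) / c₁)) • (c₁⁻¹ • ContinuousLinearMap.fst ℝ ℝ ℝ)
        + (8 * c₁ ^ 3 * Real.exp (-((p.1 + c₂) / c₁))) • (-(c₁⁻¹ • ContinuousLinearMap.fst ℝ ℝ ℝ))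
        + (4 : ℝ) • ((2 * p.2 ^ 1) • ContinuousLinearMap.snd ℝ ℝ ℝ))) p :=
  (Real.hasDerivAt_sqrt hp.ne').comp_hasFDerivAt p (hR_deriv p)

lemma hSinv_deriv (p : ℝ × ℝ) (hp : 0 < Rf c₁ c₂ p) :
    HasFDerivAt (fun q => (Real.sqrt (Rf c₁ c₂ q))⁻¹)
      ((-(Real.sqrt (Rf c₁ c₂ p) ^ 2)⁻¹) •
        ((1 / (2 * Real.sqrt (Rf c₁ c₂ p))) •
        ((2 * c₁ * Real.exp ((p.1 + c₂) / c₁)) • (c₁⁻¹ • ContinuousLinearMap.fst ℝ ℝ ℝ)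
        + (8 * c₁ ^ 3 * Real.exp (-((p.1 + c₂) / c₁))) • (-(c₁⁻¹ • ContinuousLinearMap.fst ℝ ℝ ℝ))
        + (4 : ℝ) • ((2 * p.2 ^ 1) • ContinuousLinearMap.snd ℝ ℝ ℝ)))) p :=
  (hasDerivAt_inv (Real.sqrt_pos.2 hp).ne').comp_hasFDerivAt p (hSqrt_deriv p hp)

end Lemmas

/-- Group-invariant solution associated to the hyperbolic rotation symmetry
`v₆ = u∂_t + t∂_u`:
`u = ½√(2c₁ e^{(x+c₂)/c₁} + 8c₁³ e^{−(x+c₂)/c₁} + 4t² + 8c₁²)`. -/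
theorem bornInfeld_invariant_solution_v6
    (c₁ c₂ : ℝ) (hc₁ : c₁ ≠ 0) :
    IsBISolution
      (fun p : ℝ × ℝ => (1 / 2) * Real.sqrt
        (2 * c₁ * Real.exp ((p.1 + c₂) / c₁) + 8 * c₁ ^ 3 * Real.exp (-((p.1 + c₂) / c₁))
          + 4 * p.2 ^ 2 + 8 * c₁ ^ 2))
      {p : ℝ × ℝ |
        2 * c₁ * Real.exp ((p.1 + c₂) / c₁) + 8 * c₁ ^ 3 * Real.exp (-((p.1 + c₂) / c₁))
          + 4 * p.2 ^ 2 + 8 * c₁ ^ 2 > 0} := by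
  show IsBISolution (fun p : ℝ × ℝ => (1 / 2) * Real.sqrt (Rf c₁ c₂ p)) {p : ℝ × ℝ | 0 < Rf c₁ c₂ p}
  set u : ℝ × ℝ → ℝ := fun p : ℝ × ℝ => (1 / 2) * Real.sqrt (Rf c₁ c₂ p) with hudef
  set Ω : Set (ℝ × ℝ) := {p : ℝ × ℝ | 0 < Rf c₁ c₂ p} with hΩdef
  have hRcont : Continuous (Rf c₁ c₂) := by
    unfold Rf; simp only [div_eq_mul_inv]; fun_prop
  have hΩopen : IsOpen Ω := isOpen_lt continuous_const hRcont
  constructor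
  · -- smoothness
    refine ⟨Ω, hΩopen, le_refl _, fun p hp => ?_⟩
    have hp' : 0 < Rf c₁ c₂ p := hp
    have hRcd : ContDiff ℝ 2 (Rf c₁ c₂) := by
      unfold Rf; simp only [div_eq_mul_inv]; fun_prop
    have h1 : ContDiffAt ℝ 2 (fun q => Real.sqrt (Rf c₁ c₂ q)) p :=
      (Real.contDiffAt_sqrt hp'.ne').comp p hRcd.contDiffAt
    exact ((h1.const_smul (1/2 : ℝ)).congr_of_eventuallyEq (by
      filter_upwards with q; simp [hudef, smul_eq_mul])).contDiffWithinAt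
  · -- the PDE
    intro p hp
    have hp' : 0 < Rf c₁ c₂ p := hp
    have hu_at : ∀ q : ℝ × ℝ, 0 < Rf c₁ c₂ q → px u q = UX c₁ c₂ q ∧ pt u q = UT c₁ c₂ q := by
      intro q hq
      have hu : HasFDerivAt u _ q := (hSqrt_deriv q hq).const_mul (1/2)
      have hg : (0:ℝ) < Real.sqrt (Rf c₁ c₂ q) := Real.sqrt_pos.2 hq
      constructor
      · unfold px
        rw [hu.fderiv]
        simp only [UX, ContinuousLinearMap.smul_apply, ContinuousLinearMap.add_apply,
          ContinuousLinearMap.neg_apply, ContinuousLinearMap.coe_fst',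
          ContinuousLinearMap.coe_snd', smul_eq_mul]
        field_simp
        ring
      · unfold pt
        rw [hu.fderiv]
        simp only [UT, ContinuousLinearMap.smul_apply, ContinuousLinearMap.add_apply,
          ContinuousLinearMap.neg_apply, ContinuousLinearMap.coe_fst',
          ContinuousLinearMap.coe_snd', smul_eq_mul]
        field_simp
        ring
    obtain ⟨hpx_eq, hpt_eq⟩ := hu_at p hp'
    have hnhds : Ω ∈ nhds p := hΩopen.mem_nhds hp
    have hEq1 : px u =ᶠ[nhds p] UX c₁ c₂ :=
      Filter.eventually_of_mem hnhds (fun q hq => (hu_at q hq).1)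
    have hEq2 : pt u =ᶠ[nhds p] UT c₁ c₂ :=
      Filter.eventually_of_mem hnhds (fun q hq => (hu_at q hq).2)
    have hN : HasFDerivAt (fun q : ℝ × ℝ =>
        2 * Real.exp ((q.1 + c₂) / c₁) - 8 * c₁ ^ 2 * Real.exp (-((q.1 + c₂) / c₁))) _ p :=
      ((hE_deriv (c₁ := c₁) (c₂ := c₂) p).const_mul 2).sub
        ((hF_deriv (c₁ := c₁) (c₂ := c₂) p).const_mul (8 * c₁ ^ 2))
    have hUX : HasFDerivAt (UX c₁ c₂) _ p :=
      (hN.mul (hSinv_deriv p hp')).const_mul (4:ℝ)⁻¹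
    have hUT : HasFDerivAt (UT c₁ c₂) _ p :=
      (hasFDerivAt_snd.mul (hSinv_deriv p hp')).const_mul 2
    have hpxpx : px (px u) p = fderiv ℝ (UX c₁ c₂) p (1, 0) := by
      show fderiv ℝ (px u) p (1, 0) = _
      rw [hEq1.fderiv_eq]
    have hpxpt : px (pt u) p = fderiv ℝ (UT c₁ c₂) p (1, 0) := by
      show fderiv ℝ (pt u) p (1, 0) = _
      rw [hEq2.fderiv_eq]
    have hptpt : pt (pt u) p = fderiv ℝ (UT c₁ c₂) p (0, 1) := by
      show fderiv ℝ (pt u) p (0, 1) = _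
      rw [hEq2.fderiv_eq]
    set g := Real.sqrt (Rf c₁ c₂ p) with hgdef
    set e := Real.exp ((p.1 + c₂) / c₁) with hedef
    set f := Real.exp (-((p.1 + c₂) / c₁)) with hfdef
    have hg : (0:ℝ) < g := Real.sqrt_pos.2 hp'
    have hef : e * f = 1 := by rw [hedef, hfdef, ← Real.exp_add]; simp
    have hg2 : g ^ 2 = 2*c₁*e + 8*c₁^3*f + 4*p.2^2 + 8*c₁^2 := by
      rw [hgdef, Real.sq_sqrt hp'.le]; rfl
    have e0 : UX c₁ c₂ p = (2*e - 8*c₁^2*f)/(4*g) := by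
      simp only [UX, ← hgdef, ← hedef, ← hfdef]
      field_simp
    have e0' : UT c₁ c₂ p = 2*p.2/g := by
      simp only [UT, ← hgdef]
      field_simp
    have e1 : fderiv ℝ (UX c₁ c₂) p (1, 0)
        = (2*e/c₁ + 8*c₁*f)/(4*g) - (2*e - 8*c₁^2*f)^2/(8*g^3) := by
      rw [hUX.fderiv]
      simp only [ContinuousLinearMap.smul_apply, ContinuousLinearMap.add_apply,
        ContinuousLinearMap.sub_apply, ContinuousLinearMap.neg_apply,
        ContinuousLinearMap.coe_fst', ContinuousLinearMap.coe_snd', smul_eq_mul,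
        ← hgdef, ← hedef, ← hfdef]
      field_simp
      ring
    have e2 : fderiv ℝ (UT c₁ c₂) p (1, 0) = -(2*e - 8*c₁^2*f)*p.2/(g^3) := by
      rw [hUT.fderiv]
      simp only [ContinuousLinearMap.smul_apply, ContinuousLinearMap.add_apply,
        ContinuousLinearMap.sub_apply, ContinuousLinearMap.neg_apply,
        ContinuousLinearMap.coe_fst', ContinuousLinearMap.coe_snd', smul_eq_mul,
        ← hgdef, ← hedef, ← hfdef]
      field_simp
      ring
    have e3 : fderiv ℝ (UT c₁ c₂) p (0, 1) = 2/g - 8*p.2^2/g^3 := by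
      rw [hUT.fderiv]
      simp only [ContinuousLinearMap.smul_apply, ContinuousLinearMap.add_apply,
        ContinuousLinearMap.sub_apply, ContinuousLinearMap.neg_apply,
        ContinuousLinearMap.coe_fst', ContinuousLinearMap.coe_snd', smul_eq_mul,
        ← hgdef, ← hedef, ← hfdef]
      field_simp
      ring
    rw [hpx_eq, hpt_eq, hpxpx, hpxpt, hptpt, e0, e0', e1, e2, e3]
    exact bi_alg c₁ e f g p.2 hc₁ hg.ne' hef hg2
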